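/- Under the standing assumptions and Assumption 2, let (x_{k+1}, x_{k+1}*) be obtained from (x_k, x_k*) by one exact NBK step with index i_k and step size t_k = t_{k,φ}, assume f_{i_k}(x_k) > 0, and let t ∈ [0, t_k]. Define x_{k+1}*(t) = x_k* − t∇f_{i_k}(x_k) and x_{k+1}(t) = ∇φ*(x_{k+1}*(t)). Then for every solution x̂ ∈ S it holds that D_φ^{x_{k+1}*}(x_{k+1}, x̂) ≤ D_φ^{x_{k+1}*(t)}(x_{k+1}(t), x̂). If moreover φ is σ-strongly convex w.r.t. a norm ‖·‖, the inequality also holds for the relaxed step size t = t_{k,σ} = σ f_{i_k}(x_k)/‖∇f_{i_k}(x_k)‖_*². -/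

import Mathlib

open Set Filter Topology MeasureTheory ProbabilityTheory

noncomputable section

abbrev Euc (d : ℕ) := EuclideanSpace ℝ (Fin d)

/-- Real inner product on `ℝ^d`. -/
def rinn {d : ℕ} (x y : Euc d) : ℝ := inner ℝ x y

/-- Effective domain of an extended-real-valued function. -/
def edom {d : ℕ} (φ : Euc d → EReal) : Set (Euc d) := {x | φ x ≠ ⊤}

/-- Convex subdifferential. -/
def subdiff {d : ℕ} (φ : Euc d → EReal) (x : Euc d) : Set (Euc d) :=
  {u | φ x ≠ ⊤ ∧ ∀ y : Euc d, φ x + ((rinn u (y - x) : ℝ) : EReal) ≤ φ y}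

/-- Domain of the subdifferential. -/
def ddom {d : ℕ} (φ : Euc d → EReal) : Set (Euc d) := {x | (subdiff φ x).Nonempty}

/-- Bregman distance `D_φ^{u}(x,y) = φ(y) - φ(x) - ⟨u, y - x⟩`. -/
def breg {d : ℕ} (φ : Euc d → EReal) (u x y : Euc d) : EReal :=
  φ y - φ x - ((rinn u (y - x) : ℝ) : EReal)

/-- Fenchel conjugate (extended-real-valued). -/
def econj {d : ℕ} (φ : Euc d → EReal) (u : Euc d) : EReal :=
  ⨆ x : Euc d, ((rinn u x : ℝ) : EReal) - φ x

/-- Real-valued Fenchel conjugate (under the standing assumptions `econj` is finite). -/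
def rconj {d : ℕ} (φ : Euc d → EReal) (u : Euc d) : ℝ := (econj φ u).toReal

/-- Gradient `∇φ*` of the conjugate. -/
def gradconj {d : ℕ} (φ : Euc d → EReal) (u : Euc d) : Euc d := gradient (rconj φ) u

def ConvexE {d : ℕ} (φ : Euc d → EReal) : Prop :=
  ∀ x y : Euc d, ∀ t : ℝ, 0 < t → t < 1 →
    φ (t • x + (1 - t) • y) ≤ (t : EReal) * φ x + ((1 - t : ℝ) : EReal) * φ y

def StrictConvexOnE {d : ℕ} (φ : Euc d → EReal) (s : Set (Euc d)) : Prop :=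
  ∀ x ∈ s, ∀ y ∈ s, x ≠ y → ∀ t : ℝ, 0 < t → t < 1 →
    φ (t • x + (1 - t) • y) < (t : EReal) * φ x + ((1 - t : ℝ) : EReal) * φ y

def ProperE {d : ℕ} (φ : Euc d → EReal) : Prop :=
  (∃ x, φ x ≠ ⊤) ∧ ∀ x, φ x ≠ ⊥

/-- `φ(x)/‖x‖ → ∞` as `‖x‖ → ∞`. -/
def Supercoercive {d : ℕ} (φ : Euc d → EReal) : Prop :=
  ∀ M : ℝ, ∃ R : ℝ, ∀ x : Euc d, R ≤ ‖x‖ → ((M * ‖x‖ : ℝ) : EReal) ≤ φ x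

/-- Essential strict convexity: strict convexity on the relative interior of the domain. -/
def EssStrictConvexE {d : ℕ} (φ : Euc d → EReal) : Prop :=
  StrictConvexOnE φ (intrinsicInterior ℝ (edom φ))

/-- Standing assumptions on the distance generating function `φ` and constraint set `C`. -/
structure PhiAssump {d : ℕ} (φ : Euc d → EReal) (C : Set (Euc d)) : Prop where
  Cne : C.Nonempty
  Cconv : Convex ℝ C
  Ccl : IsClosed C
  proper : ProperE φ
  conv : ConvexE φ
  lsc : LowerSemicontinuous φ
  coercive : Supercoercive φ
  essstrict : EssStrictConvexE φ
  domC : closure (ddom φ) = C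
  ri_eq : ddom φ = intrinsicInterior ℝ (edom φ)

/-- Standing assumption (iv): Bregman distances tend to zero along convergent sequences. -/
def BregCont {d : ℕ} (φ : Euc d → EReal) : Prop :=
  ∀ x ∈ edom φ, ∀ xk : ℕ → Euc d, ∀ uk : ℕ → Euc d,
    (∀ k, uk k ∈ subdiff φ (xk k)) → Tendsto xk atTop (𝓝 x) →
    Tendsto (fun k => breg φ (uk k) (xk k) x) atTop (𝓝 (0 : EReal))

/-- `f` is continuously differentiable on `Dset ⊇ C`, with gradients `f'`. -/
structure FAssump {d n : ℕ} (f : Fin n → Euc d → ℝ) (f' : Fin n → Euc d → Euc d)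
    (Dset C : Set (Euc d)) : Prop where
  CsubD : C ⊆ Dset
  grad : ∀ i, ∀ x ∈ Dset, HasGradientAt (f i) (f' i x) x
  cont : ∀ i, ContinuousOn (f' i) Dset

/-- Solution set `S = C ∩ f⁻¹(0)`. -/
def solSet {d n : ℕ} (f : Fin n → Euc d → ℝ) (C : Set (Euc d)) : Set (Euc d) :=
  {x ∈ C | ∀ i, f i x = 0}

/-- `N` is a norm on `ℝ^d`. -/
def IsANorm {d : ℕ} (N : Euc d → ℝ) : Prop :=
  (∀ x, N x = 0 ↔ x = 0) ∧ (∀ (c : ℝ) (x : Euc d), N (c • x) = |c| * N x) ∧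
    ∀ x y : Euc d, N (x + y) ≤ N x + N y

/-- Dual norm of `N`. -/
def dualN {d : ℕ} (N : Euc d → ℝ) (u : Euc d) : ℝ :=
  sSup {r : ℝ | ∃ y : Euc d, N y ≤ 1 ∧ r = (rinn u y)}

/-- `φ` is `σ`-strongly convex w.r.t. the norm `N`. -/
def StronglyConvexWrt {d : ℕ} (φ : Euc d → EReal) (σ : ℝ) (N : Euc d → ℝ) : Prop :=
  ∀ x ∈ ddom φ, ∀ y ∈ ddom φ, ∀ u ∈ subdiff φ x,
    ((σ / 2 * (N (x - y)) ^ 2 : ℝ) : EReal) ≤ breg φ u x y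

/-- `φ` is `M`-smooth w.r.t. the norm `N`: finite everywhere (subdifferentiable everywhere)
with the quadratic upper bound. -/
def SmoothWrt {d : ℕ} (φ : Euc d → EReal) (M : ℝ) (N : Euc d → ℝ) : Prop :=
  (∀ x : Euc d, (subdiff φ x).Nonempty) ∧
    ∀ x y : Euc d, ∀ u ∈ subdiff φ x,
      breg φ u x y ≤ ((M / 2 * (N (x - y)) ^ 2 : ℝ) : EReal)

/-- `g` (with gradient `g'`) is star-convex. -/
def StarConvexWith {d : ℕ} (g : Euc d → ℝ) (g' : Euc d → Euc d) : Prop :=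
  (∃ z : Euc d, ∀ y, g z ≤ g y) ∧
    ∀ x z : Euc d, (∀ y, g z ≤ g y) → g x + rinn (g' x) (z - x) ≤ g z

/-- `g` (with gradient `g'`) is strictly star-convex. -/
def StrictStarConvexWith {d : ℕ} (g : Euc d → ℝ) (g' : Euc d → Euc d) : Prop :=
  (∃ z : Euc d, ∀ y, g z ≤ g y) ∧
    ∀ x z : Euc d, (∀ y, g z ≤ g y) → x ≠ z → g x + rinn (g' x) (z - x) < g z

/-- `g` is `μ`-strongly star-convex relative to `φ`. -/
def StronglyStarConvexRel {d : ℕ} (g : Euc d → ℝ) (g' : Euc d → Euc d) (μ : ℝ)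
    (φ : Euc d → EReal) : Prop :=
  (∃ z : Euc d, ∀ y, g z ≤ g y) ∧
    ∀ x : Euc d, ∀ u ∈ subdiff φ x, ∀ z : Euc d, (∀ y, g z ≤ g y) →
      ((g x + rinn (g' x) (z - x) : ℝ) : EReal) + (μ : EReal) * breg φ u x z ≤ (g z : EReal)

def IsAffineF {d : ℕ} (g : Euc d → ℝ) : Prop :=
  ∃ (a : Euc d) (b : ℝ), ∀ x, g x = (rinn a x) + b

/-- Assumption 2: each component is either nonnegative star-convex with a zero in `dom ∂φ`,
nonnegative strictly star-convex, or affine. -/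
def Assump2 {d n : ℕ} (φ : Euc d → EReal) (f : Fin n → Euc d → ℝ)
    (f' : Fin n → Euc d → Euc d) : Prop :=
  ∀ i : Fin n,
    ((∀ x, 0 ≤ f i x) ∧ StarConvexWith (f i) (f' i) ∧ ∃ z ∈ ddom φ, f i z = 0) ∨
    ((∀ x, 0 ≤ f i x) ∧ StrictStarConvexWith (f i) (f' i)) ∨
    IsAffineF (f i)

/-- `g` is `L`-smooth w.r.t. the norm `N` (quadratic upper bound). -/
def LSmoothWrt {d : ℕ} (g : Euc d → ℝ) (g' : Euc d → Euc d) (L : ℝ) (N : Euc d → ℝ) : Prop :=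
  ∀ x y : Euc d, g y ≤ g x + rinn (g' x) (y - x) + L / 2 * (N (x - y)) ^ 2

/-- Hyperplane given by the linearization of `f i` at `x`. -/
def linHyp {d n : ℕ} (f : Fin n → Euc d → ℝ) (f' : Fin n → Euc d → Euc d)
    (i : Fin n) (x : Euc d) : Set (Euc d) :=
  {y | f i x + rinn (f' i x) (y - x) = 0}

/-- Objective of the one-dimensional dual problem defining the exact NBK step size. -/
def lineObj {d n : ℕ} (φ : Euc d → EReal) (f : Fin n → Euc d → ℝ)
    (f' : Fin n → Euc d → Euc d) (i : Fin n) (x u : Euc d) (t : ℝ) : ℝ :=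
  rconj φ (u - t • f' i x) + t * (rinn (f' i x) x - f i x)

/-- Local tangential cone condition with constant `η` on `U`. -/
def TCCOn {d : ℕ} (g : Euc d → ℝ) (g' : Euc d → Euc d) (η : ℝ) (U : Set (Euc d)) : Prop :=
  ∀ x ∈ U, ∀ y ∈ U, |g x + rinn (g' x) (y - x) - g y| ≤ η * |g x - g y|

/-- The set `B_{r,φ}(z)`. -/
def BregBall {d : ℕ} (φ : Euc d → EReal) (C : Set (Euc d)) (r : ℝ) (z : Euc d) :
    Set (Euc d) :=
  {x ∈ C | ∀ u ∈ subdiff φ x, breg φ u x z ≤ (r : EReal)}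

end
noncomputable section Chunk1

variable {d : ℕ} {φ : Euc d → EReal} {C : Set (Euc d)}

lemma phi_ne_bot (hφ : PhiAssump φ C) (y : Euc d) : φ y ≠ ⊥ := hφ.proper.2 y

/-- lower bound of a lsc proper function on closed balls -/
lemma ball_lb (hφ : PhiAssump φ C) (r : ℝ) :
    ∃ m : ℝ, ∀ x : Euc d, ‖x‖ ≤ r → (m : EReal) ≤ φ x := by
  by_contra h
  push_neg at h
  -- sequence with φ (x k) < -k
  have hseq : ∀ k : ℕ, ∃ x : Euc d, ‖x‖ ≤ r ∧ φ x < ((-(k : ℝ) : ℝ) : EReal) := by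
    intro k
    obtain ⟨x, hx1, hx2⟩ := h (-(k : ℝ))
    exact ⟨x, hx1, hx2⟩
  choose xs hxs1 hxs2 using hseq
  have hcb : IsCompact (Metric.closedBall (0 : Euc d) r) :=
    isCompact_closedBall 0 r
  have hmem : ∀ k, xs k ∈ Metric.closedBall (0 : Euc d) r := by
    intro k; simpa [Metric.mem_closedBall, dist_zero_right] using hxs1 k
  obtain ⟨y, -, ψ, hψmono, hψtend⟩ := hcb.tendsto_subseq hmem
  -- pick a real below φ y
  have hyb : φ y ≠ ⊥ := phi_ne_bot hφ y
  obtain ⟨c, hc⟩ : ∃ c : ℝ, (c : EReal) < φ y := by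
    rcases eq_or_ne (φ y) ⊤ with h1 | h1
    · exact ⟨0, h1 ▸ EReal.coe_lt_top 0⟩
    · exact ⟨(φ y).toReal - 1, by
        rw [← EReal.coe_toReal h1 hyb]
        exact_mod_cast sub_one_lt _⟩
  have hev : ∀ᶠ j in atTop, (c : EReal) < φ (xs (ψ j)) :=
    hψtend.eventually (hφ.lsc y c hc)
  have hev2 : ∀ᶠ j in atTop, φ (xs (ψ j)) < (c : EReal) := by
    filter_upwards [eventually_ge_atTop (Nat.ceil (|c| + 1))] with j hj
    refine lt_of_lt_of_le (hxs2 (ψ j)) ?_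
    have : (ψ j : ℝ) ≥ |c| + 1 := by
      have h1 : (Nat.ceil (|c| + 1) : ℝ) ≤ (j : ℝ) := by
        exact_mod_cast hj
      have h2 : (j : ℝ) ≤ (ψ j : ℝ) := by exact_mod_cast hψmono.le_apply
      calc (|c| + 1 : ℝ) ≤ (Nat.ceil (|c| + 1) : ℝ) := Nat.le_ceil _
        _ ≤ (ψ j : ℝ) := h1.trans h2
    have : -(ψ j : ℝ) ≤ c := by
      have := neg_abs_le c
      linarith
    exact_mod_cast this
  obtain ⟨j, h1, h2⟩ := (hev.and hev2).exists
  exact absurd (h1.trans h2) (lt_irrefl _)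

end Chunk1
noncomputable section Chunk2

variable {d : ℕ} {φ : Euc d → EReal} {C : Set (Euc d)}

lemma term_le_econj (v x : Euc d) :
    ((rinn v x : ℝ) : EReal) - φ x ≤ econj φ v := le_iSup (fun x => ((rinn v x : ℝ) : EReal) - φ x) x

lemma rinn_le_norm (v x : Euc d) : rinn v x ≤ ‖v‖ * ‖x‖ := by
  simpa [rinn] using real_inner_le_norm v x

lemma econj_ne_bot (hφ : PhiAssump φ C) (v : Euc d) : econj φ v ≠ ⊥ := by
  obtain ⟨x0, hx0⟩ := hφ.proper.1
  have h1 : ((rinn v x0 : ℝ) : EReal) - φ x0 ≤ econj φ v := term_le_econj v x0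
  have h2 : ((rinn v x0 : ℝ) : EReal) - φ x0 ≠ ⊥ := by
    rw [← EReal.coe_toReal hx0 (phi_ne_bot hφ x0), ← EReal.coe_sub]
    exact EReal.coe_ne_bot _
  intro hb
  rw [hb, le_bot_iff] at h1
  exact h2 h1

lemma econj_ne_top (hφ : PhiAssump φ C) (v : Euc d) : econj φ v ≠ ⊤ := by
  obtain ⟨R, hR⟩ := hφ.coercive (‖v‖ + 1)
  set r := max R 0 with hr
  obtain ⟨m, hm⟩ := ball_lb hφ r
  have hub : ∀ x : Euc d, ((rinn v x : ℝ) : EReal) - φ x ≤ ((max 0 (‖v‖ * r - m) : ℝ) : EReal) := by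
    intro x
    rcases le_or_gt ‖x‖ r with h | h
    · have h1 : φ x ≥ (m : EReal) := hm x h
      calc ((rinn v x : ℝ) : EReal) - φ x ≤ ((rinn v x : ℝ) : EReal) - (m : EReal) := by
            exact EReal.sub_le_sub le_rfl h1
        _ = ((rinn v x - m : ℝ) : EReal) := by rw [EReal.coe_sub]
        _ ≤ ((max 0 (‖v‖ * r - m) : ℝ) : EReal) := by
            apply EReal.coe_le_coe_iff.2
            have h2 : rinn v x ≤ ‖v‖ * r := by
              calc rinn v x ≤ ‖v‖ * ‖x‖ := rinn_le_norm v x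
                _ ≤ ‖v‖ * r := by
                    apply mul_le_mul_of_nonneg_left h (norm_nonneg v)
            have := le_max_right 0 (‖v‖ * r - m)
            linarith
    · have h1 : (((‖v‖ + 1) * ‖x‖ : ℝ) : EReal) ≤ φ x := by
        apply hR
        calc R ≤ r := le_max_left R 0
          _ ≤ ‖x‖ := h.le
      calc ((rinn v x : ℝ) : EReal) - φ x ≤ ((rinn v x : ℝ) : EReal) - (((‖v‖ + 1) * ‖x‖ : ℝ) : EReal) :=
            EReal.sub_le_sub le_rfl h1
        _ = ((rinn v x - (‖v‖ + 1) * ‖x‖ : ℝ) : EReal) := by rw [EReal.coe_sub]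
        _ ≤ ((max 0 (‖v‖ * r - m) : ℝ) : EReal) := by
            apply EReal.coe_le_coe_iff.2
            have h2 : rinn v x ≤ ‖v‖ * ‖x‖ := rinn_le_norm v x
            have h3 : (0:ℝ) ≤ ‖x‖ := norm_nonneg x
            have := le_max_left (0:ℝ) (‖v‖ * r - m)
            nlinarith
  intro ht
  have := iSup_le hub
  rw [show (⨆ x : Euc d, (((rinn v x : ℝ) : EReal) - φ x)) = econj φ v from rfl, ht] at this
  exact absurd this (by simp)

lemma econj_eq_rconj (hφ : PhiAssump φ C) (v : Euc d) :
    econj φ v = ((rconj φ v : ℝ) : EReal) :=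
  (EReal.coe_toReal (econj_ne_top hφ v) (econj_ne_bot hφ v)).symm

/-- real form of `term_le_econj` -/
lemma term_le_rconj (hφ : PhiAssump φ C) (v x : Euc d) (hx : φ x ≠ ⊤) :
    rinn v x - (φ x).toReal ≤ rconj φ v := by
  have := term_le_econj (φ := φ) v x
  rw [econj_eq_rconj hφ v, ← EReal.coe_toReal hx (phi_ne_bot hφ x), ← EReal.coe_sub] at this
  exact_mod_cast this

/-- near maximizers with bounded dual vector are uniformly bounded -/
lemma near_max_bound (hφ : PhiAssump φ C) (K : ℝ) :
    ∃ B : ℝ, 0 ≤ B ∧ ∀ v : Euc d, ‖v‖ ≤ K → ∀ x : Euc d, φ x ≠ ⊤ →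
      rconj φ v - 1 ≤ rinn v x - (φ x).toReal → ‖x‖ ≤ B := by
  obtain ⟨x0, hx0⟩ := hφ.proper.1
  obtain ⟨R, hR⟩ := hφ.coercive (K + 1)
  set c0 : ℝ := K * ‖x0‖ + |(φ x0).toReal| + 1 with hc0
  refine ⟨max (max R 0) c0, le_trans (le_max_right R 0) ((le_max_left _ _ : max R 0 ≤ _)), ?_⟩
  intro v hv x hx hnear
  rcases le_or_gt ‖x‖ (max R 0) with h | h
  · exact h.trans (le_max_left _ _)
  -- coercivity applies
  have h1 : (((K + 1) * ‖x‖ : ℝ) : EReal) ≤ φ x := hR x ((le_max_left R 0).trans h.le)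
  have h1' : (K + 1) * ‖x‖ ≤ (φ x).toReal := by
    rw [← EReal.coe_toReal hx (phi_ne_bot hφ x)] at h1
    exact_mod_cast h1
  have h2 : rconj φ v ≥ rinn v x0 - (φ x0).toReal := term_le_rconj hφ v x0 hx0
  have h3 : rinn v x0 ≥ -(K * ‖x0‖) := by
    have := rinn_le_norm v (-x0)
    have h4 : rinn v (-x0) = -rinn v x0 := by simp [rinn, inner_neg_right]
    have h5 : ‖v‖ * ‖(-x0 : Euc d)‖ ≤ K * ‖x0‖ := by
      rw [norm_neg]
      exact mul_le_mul_of_nonneg_right hv (norm_nonneg x0)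
    nlinarith [this]
  have h6 : rinn v x ≤ K * ‖x‖ := by
    have := rinn_le_norm v x
    nlinarith [norm_nonneg x]
  have h7 : -(K * ‖x0‖) - (φ x0).toReal - 1 ≤ K * ‖x‖ - (K + 1) * ‖x‖ := by
    calc -(K * ‖x0‖) - (φ x0).toReal - 1 ≤ rconj φ v - 1 := by linarith
      _ ≤ rinn v x - (φ x).toReal := hnear
      _ ≤ K * ‖x‖ - (K + 1) * ‖x‖ := by linarith
  have hxx : K * ‖x‖ - (K + 1) * ‖x‖ = -‖x‖ := by ring
  rw [hxx] at h7
  have h8 : ‖x‖ ≤ c0 := by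
    have := le_abs_self (φ x0).toReal
    simp only [hc0]
    linarith
  exact h8.trans (le_max_right _ _)

end Chunk2
noncomputable section Chunk3

variable {d : ℕ} {φ : Euc d → EReal} {C : Set (Euc d)}

lemma lsc_le_limit (hφ : PhiAssump φ C) {y : Euc d} {xs : ℕ → Euc d} {rs : ℕ → ℝ} {L : ℝ}
    (hx : Tendsto xs atTop (𝓝 y)) (hr : Tendsto rs atTop (𝓝 L))
    (hle : ∀ k, φ (xs k) ≤ ((rs k : ℝ) : EReal)) : φ y ≤ ((L : ℝ) : EReal) := by
  by_contra h
  push_neg at h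
  obtain ⟨c, hc1, hc2⟩ : ∃ c : ℝ, L < c ∧ ((c : ℝ) : EReal) < φ y := by
    rcases eq_or_ne (φ y) ⊤ with h1 | h1
    · exact ⟨L + 1, by linarith, h1 ▸ EReal.coe_lt_top _⟩
    · have hyb : φ y ≠ ⊥ := phi_ne_bot hφ y
      have hL : L < (φ y).toReal := by
        rw [← EReal.coe_toReal h1 hyb] at h
        exact_mod_cast h
      have key : (((L + (φ y).toReal) / 2 : ℝ) : EReal) < φ y := by
        conv_rhs => rw [← EReal.coe_toReal h1 hyb]
        exact EReal.coe_lt_coe_iff.2 (by linarith)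
      exact ⟨(L + (φ y).toReal) / 2, by linarith, key⟩
  have hev : ∀ᶠ k in atTop, ((c : ℝ) : EReal) < φ (xs k) := hx.eventually (hφ.lsc y c hc2)
  have hev2 : ∀ᶠ k in atTop, c < rs k := by
    filter_upwards [hev] with k hk
    have := lt_of_lt_of_le hk (hle k)
    exact_mod_cast this
  have : c ≤ L := ge_of_tendsto hr (hev2.mono fun k hk => hk.le)
  linarith

lemma ereal_sub_le_coe {a r : ℝ} {b : EReal} (h : ((a : ℝ) : EReal) - b ≤ ((r : ℝ) : EReal))
    (hb : b ≠ ⊥) : ((a - r : ℝ) : EReal) ≤ b := by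
  induction b with
  | bot => exact absurd rfl hb
  | coe s =>
    have h' : a - s ≤ r := by exact_mod_cast h
    exact EReal.coe_le_coe_iff.2 (by linarith)
  | top => exact le_top

/-- existence of the maximizer in the conjugate supremum -/
lemma exists_max (hφ : PhiAssump φ C) (v : Euc d) :
    ∃ xb : Euc d, φ xb = ((rinn v xb - rconj φ v : ℝ) : EReal) := by
  have hnear : ∀ k : ℕ, ∃ x : Euc d,
      ((rconj φ v - 1 / (k + 1) : ℝ) : EReal) < ((rinn v x : ℝ) : EReal) - φ x := by
    intro k
    have h1 : ((rconj φ v - 1 / (k + 1) : ℝ) : EReal) < econj φ v := by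
      rw [econj_eq_rconj hφ v]
      apply EReal.coe_lt_coe_iff.2
      have : (0:ℝ) < 1 / (k + 1) := by positivity
      linarith
    rw [econj, lt_iSup_iff] at h1
    exact h1
  choose xs hxs using hnear
  have hnt : ∀ k, φ (xs k) ≠ ⊤ := by
    intro k h
    have := hxs k
    rw [h, EReal.sub_top] at this
    exact absurd this (by simp)
  have hreal : ∀ k : ℕ, rconj φ v - 1 / (k + 1) < rinn v (xs k) - (φ (xs k)).toReal := by
    intro k
    have := hxs k
    rw [← EReal.coe_toReal (hnt k) (phi_ne_bot hφ (xs k)), ← EReal.coe_sub] at this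
    exact_mod_cast this
  obtain ⟨B, hB0, hB⟩ := near_max_bound hφ ‖v‖
  have hbd : ∀ k, ‖xs k‖ ≤ B := by
    intro k
    apply hB v le_rfl (xs k) (hnt k)
    have h1 : (0:ℝ) < 1 / ((k:ℝ) + 1) := by positivity
    have h2 : 1 / ((k:ℝ) + 1) ≤ 1 := by
      rw [div_le_one (by positivity)]
      have : (0:ℝ) ≤ (k:ℝ) := Nat.cast_nonneg k
      linarith
    have := hreal k
    linarith
  have hmem : ∀ k, xs k ∈ Metric.closedBall (0 : Euc d) B := by
    intro k; simpa [Metric.mem_closedBall, dist_zero_right] using hbd k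
  obtain ⟨y, -, ψ, hψmono, hψtend⟩ := (isCompact_closedBall (0 : Euc d) B).tendsto_subseq hmem
  -- values converge
  have hval_ub : ∀ k, (φ (xs k)).toReal ≤ rinn v (xs k) - rconj φ v + 1 / (k + 1) := by
    intro k; have := hreal k; linarith
  have hval_lb : ∀ k, rinn v (xs k) - rconj φ v ≤ (φ (xs k)).toReal := by
    intro k
    have := term_le_rconj hφ v (xs k) (hnt k)
    linarith
  -- φ (xs (ψ j)) ≤ rs j with rs j → rinn v y - rconj φ v
  have hinner : Tendsto (fun j => rinn v (xs (ψ j))) atTop (𝓝 (rinn v y)) := by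
    have hcont : Continuous fun w : Euc d => rinn v w := by
      simp only [rinn]
      exact continuous_const.inner continuous_id
    exact (hcont.tendsto y).comp hψtend
  have hrs : Tendsto (fun j => rinn v (xs (ψ j)) - rconj φ v + 1 / (ψ j + 1)) atTop
      (𝓝 (rinn v y - rconj φ v)) := by
    have h1 : Tendsto (fun j : ℕ => 1 / ((ψ j : ℝ) + 1)) atTop (𝓝 0) := by
      apply Tendsto.comp (tendsto_one_div_add_atTop_nhds_zero_nat)
      exact hψmono.tendsto_atTop
    have h2 : Tendsto (fun j => rinn v (xs (ψ j)) - rconj φ v) atTop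
        (𝓝 (rinn v y - rconj φ v)) := hinner.sub tendsto_const_nhds
    have h3 := h2.add h1
    simpa using h3
  have hphile : φ y ≤ ((rinn v y - rconj φ v : ℝ) : EReal) := by
    apply lsc_le_limit hφ hψtend hrs
    intro j
    simp only [Function.comp_apply]
    rw [← EReal.coe_toReal (hnt (ψ j)) (phi_ne_bot hφ (xs (ψ j)))]
    exact_mod_cast hval_ub (ψ j)
  have hphige : ((rinn v y - rconj φ v : ℝ) : EReal) ≤ φ y := by
    apply ereal_sub_le_coe _ (phi_ne_bot hφ y)
    rw [← econj_eq_rconj hφ v]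
    exact term_le_econj v y
  exact ⟨y, le_antisymm hphile hphige⟩

end Chunk3
noncomputable section Chunk4

variable {d : ℕ} {φ : Euc d → EReal} {C : Set (Euc d)}

/-- property of being the maximizer in the conjugate supremum -/
def IsCMax (φ : Euc d → EReal) (v xb : Euc d) : Prop :=
  φ xb = ((rinn v xb - rconj φ v : ℝ) : EReal)

lemma IsCMax.ne_top {v xb : Euc d} (h : IsCMax φ v xb) : φ xb ≠ ⊤ := by
  rw [IsCMax] at h; rw [h]; exact EReal.coe_ne_top _

lemma IsCMax.toReal {v xb : Euc d} (h : IsCMax φ v xb) :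
    (φ xb).toReal = rinn v xb - rconj φ v := by
  rw [IsCMax] at h; rw [h]; exact EReal.toReal_coe _

lemma IsCMax.mem_subdiff (hφ : PhiAssump φ C) {v xb : Euc d} (h : IsCMax φ v xb) :
    v ∈ subdiff φ xb := by
  refine ⟨h.ne_top, fun y => ?_⟩
  rcases eq_or_ne (φ y) ⊤ with hy | hy
  · rw [hy]; exact le_top
  have hterm := term_le_rconj hφ v y hy
  rw [h, ← EReal.coe_toReal hy (phi_ne_bot hφ y), ← EReal.coe_add, EReal.coe_le_coe_iff]
  have hsub : rinn v (y - xb) = rinn v y - rinn v xb := by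
    simp [rinn, inner_sub_right]
  rw [IsCMax] at h
  linarith [hterm, hsub.le, hsub.ge]

lemma mem_subdiff_isMax (hφ : PhiAssump φ C) {v x : Euc d} (h : v ∈ subdiff φ x) :
    IsCMax φ v x := by
  obtain ⟨hxt, hsub⟩ := h
  have hxb : φ x ≠ ⊥ := phi_ne_bot hφ x
  set p : ℝ := (φ x).toReal with hp
  have hφx : φ x = ((p : ℝ) : EReal) := (EReal.coe_toReal hxt hxb).symm
  -- econj φ v = ⟨v,x⟩ - p
  have hub : ∀ y : Euc d, ((rinn v y : ℝ) : EReal) - φ y ≤ ((rinn v x - p : ℝ) : EReal) := by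
    intro y
    rcases eq_or_ne (φ y) ⊤ with hy | hy
    · rw [hy, EReal.sub_top]; exact bot_le
    have h1 := hsub y
    rw [hφx, ← EReal.coe_toReal hy (phi_ne_bot hφ y), ← EReal.coe_add,
      EReal.coe_le_coe_iff] at h1
    rw [← EReal.coe_toReal hy (phi_ne_bot hφ y), ← EReal.coe_sub, EReal.coe_le_coe_iff]
    have hsub2 : rinn v (y - x) = rinn v y - rinn v x := by
      simp [rinn, inner_sub_right]
    linarith [hsub2.le, hsub2.ge]
  have hge : ((rinn v x - p : ℝ) : EReal) ≤ econj φ v := by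
    have := term_le_econj (φ := φ) v x
    rw [hφx, ← EReal.coe_sub] at this
    exact this
  have heq : econj φ v = ((rinn v x - p : ℝ) : EReal) := le_antisymm (iSup_le hub) hge
  have : rconj φ v = rinn v x - p := by
    rw [rconj, heq, EReal.toReal_coe]
  rw [IsCMax, hφx]
  exact congrArg _ (by linarith)

lemma isMax_unique (hφ : PhiAssump φ C) {v x1 x2 : Euc d}
    (h1 : IsCMax φ v x1) (h2 : IsCMax φ v x2) : x1 = x2 := by
  by_contra hne
  have hd1 : x1 ∈ intrinsicInterior ℝ (edom φ) := by
    rw [← hφ.ri_eq]; exact ⟨v, h1.mem_subdiff hφ⟩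
  have hd2 : x2 ∈ intrinsicInterior ℝ (edom φ) := by
    rw [← hφ.ri_eq]; exact ⟨v, h2.mem_subdiff hφ⟩
  have hstrict := hφ.essstrict x1 hd1 x2 hd2 hne (1/2) (by norm_num) (by norm_num)
  set r1 : ℝ := rinn v x1 - rconj φ v
  set r2 : ℝ := rinn v x2 - rconj φ v
  set mid : Euc d := (1/2 : ℝ) • x1 + (1 - 1/2 : ℝ) • x2 with hmid
  rw [h1, h2] at hstrict
  have hrhs : ((1/2 : ℝ) : EReal) * ((r1 : ℝ) : EReal) + ((1 - 1/2 : ℝ) : EReal) * ((r2 : ℝ) : EReal)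
      = (((r1 + r2) / 2 : ℝ) : EReal) := by
    rw [← EReal.coe_mul, ← EReal.coe_mul, ← EReal.coe_add]
    exact congrArg _ (by ring)
  rw [hrhs] at hstrict
  -- φ mid is finite and < (r1+r2)/2
  have hmb : φ mid ≠ ⊥ := phi_ne_bot hφ mid
  have hmt : φ mid ≠ ⊤ := ne_top_of_lt hstrict
  have hmlt : (φ mid).toReal < (r1 + r2) / 2 := by
    rw [← EReal.coe_toReal hmt hmb, EReal.coe_lt_coe_iff] at hstrict
    exact hstrict
  have hmidinner : rinn v mid = (rinn v x1 + rinn v x2) / 2 := by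
    simp only [hmid, rinn, inner_add_right, real_inner_smul_right]
    ring
  have hterm : rinn v mid - (φ mid).toReal ≤ rconj φ v := term_le_rconj hφ v mid hmt
  rw [hmidinner] at hterm
  simp only [r1, r2] at hmlt
  linarith

/-- the (unique) maximizer in the conjugate supremum -/
def mmax (φ : Euc d → EReal) (v : Euc d) : Euc d :=
  open Classical in
  if h : ∃ xb : Euc d, IsCMax φ v xb then h.choose else 0

lemma mmax_isMax (hφ : PhiAssump φ C) (v : Euc d) : IsCMax φ v (mmax φ v) := by
  have he : ∃ xb : Euc d, IsCMax φ v xb := exists_max hφ v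
  rw [mmax, dif_pos he]
  exact he.choose_spec

lemma isMax_eq_mmax (hφ : PhiAssump φ C) {v xb : Euc d} (h : IsCMax φ v xb) :
    mmax φ v = xb := isMax_unique hφ (mmax_isMax hφ v) h

end Chunk4
noncomputable section Chunk5

variable {d : ℕ} {φ : Euc d → EReal} {C : Set (Euc d)}

lemma rinn_add_left (u v w : Euc d) : rinn (u + v) w = rinn u w + rinn v w := by
  simp [rinn, inner_add_left]

lemma rinn_sub_left (u v w : Euc d) : rinn (u - v) w = rinn u w - rinn v w := by
  simp [rinn, inner_sub_left]

lemma rinn_sub_right (u v w : Euc d) : rinn u (v - w) = rinn u v - rinn u w := by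
  simp [rinn, inner_sub_right]

lemma rinn_smul_left (t : ℝ) (u w : Euc d) : rinn (t • u) w = t * rinn u w := by
  simp only [rinn]
  exact real_inner_smul_left u w t

lemma abs_rinn_le (u w : Euc d) : |rinn u w| ≤ ‖u‖ * ‖w‖ := by
  simpa [rinn] using abs_real_inner_le_norm u w

lemma danskin_lb (hφ : PhiAssump φ C) (v h : Euc d) :
    rconj φ v + rinn h (mmax φ v) ≤ rconj φ (v + h) := by
  have hm := mmax_isMax hφ v
  have := term_le_rconj hφ (v + h) (mmax φ v) hm.ne_top
  rw [hm.toReal, rinn_add_left] at this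
  linarith

lemma danskin_ub (hφ : PhiAssump φ C) (v h : Euc d) :
    rconj φ (v + h) ≤ rconj φ v + rinn h (mmax φ (v + h)) := by
  have hm := mmax_isMax hφ (v + h)
  have := term_le_rconj hφ v (mmax φ (v + h)) hm.ne_top
  rw [hm.toReal, rinn_add_left] at this
  linarith

lemma mmax_bound (hφ : PhiAssump φ C) (K : ℝ) :
    ∃ B : ℝ, 0 ≤ B ∧ ∀ v : Euc d, ‖v‖ ≤ K → ‖mmax φ v‖ ≤ B := by
  obtain ⟨B, hB0, hB⟩ := near_max_bound hφ K
  refine ⟨B, hB0, fun v hv => ?_⟩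
  have hm := mmax_isMax hφ v
  exact hB v hv (mmax φ v) hm.ne_top (by rw [hm.toReal]; linarith)

lemma mmax_cont (hφ : PhiAssump φ C) (v : Euc d) :
    ∀ ε : ℝ, 0 < ε → ∃ δ : ℝ, 0 < δ ∧ ∀ h : Euc d, ‖h‖ < δ →
      ‖mmax φ (v + h) - mmax φ v‖ ≤ ε := by
  intro ε hε
  by_contra hcon
  push_neg at hcon
  have hseq : ∀ k : ℕ, ∃ h : Euc d, ‖h‖ < 1 / (k + 1) ∧ ε < ‖mmax φ (v + h) - mmax φ v‖ := by
    intro k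
    obtain ⟨h, h1, h2⟩ := hcon (1 / (k + 1)) (by positivity)
    exact ⟨h, h1, h2⟩
  choose hs hs1 hs2 using hseq
  have hsmall : ∀ k : ℕ, ‖hs k‖ ≤ 1 := by
    intro k
    refine (hs1 k).le.trans ?_
    rw [div_le_one (by positivity)]
    have : (0:ℝ) ≤ (k:ℝ) := Nat.cast_nonneg k
    linarith
  have hs0 : Tendsto hs atTop (𝓝 0) := by
    rw [tendsto_iff_norm_sub_tendsto_zero]
    have h1 : Tendsto (fun k : ℕ => 1 / ((k:ℝ) + 1)) atTop (𝓝 0) :=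
      tendsto_one_div_add_atTop_nhds_zero_nat
    apply squeeze_zero (fun k => norm_nonneg _) (fun k => by simpa using (hs1 k).le) h1
  obtain ⟨B, hB0, hB⟩ := mmax_bound hφ (‖v‖ + 1)
  have hxk : ∀ k, ‖mmax φ (v + hs k)‖ ≤ B := by
    intro k
    apply hB
    calc ‖v + hs k‖ ≤ ‖v‖ + ‖hs k‖ := norm_add_le _ _
      _ ≤ ‖v‖ + 1 := by linarith [hsmall k]
  have hmem : ∀ k, mmax φ (v + hs k) ∈ Metric.closedBall (0 : Euc d) B := by
    intro k; simpa [Metric.mem_closedBall, dist_zero_right] using hxk k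
  obtain ⟨y, -, ψ, hψmono, hψtend⟩ := (isCompact_closedBall (0 : Euc d) B).tendsto_subseq hmem
  have hψ0 : Tendsto (fun j => hs (ψ j)) atTop (𝓝 0) := hs0.comp hψmono.tendsto_atTop
  have hv' : Tendsto (fun j => v + hs (ψ j)) atTop (𝓝 v) := by
    simpa using (tendsto_const_nhds (x := v) (f := atTop)).add hψ0
  -- rconj converges
  have hrconj : Tendsto (fun j => rconj φ (v + hs (ψ j))) atTop (𝓝 (rconj φ v)) := by
    have hbnd : ∀ j, |rconj φ (v + hs (ψ j)) - rconj φ v| ≤ ‖hs (ψ j)‖ * (‖mmax φ v‖ + B) := by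
      intro j
      have h1 := danskin_lb hφ v (hs (ψ j))
      have h2 := danskin_ub hφ v (hs (ψ j))
      have h3 : |rinn (hs (ψ j)) (mmax φ v)| ≤ ‖hs (ψ j)‖ * ‖mmax φ v‖ := abs_rinn_le _ _
      have h4 : |rinn (hs (ψ j)) (mmax φ (v + hs (ψ j)))| ≤ ‖hs (ψ j)‖ * B := by
        refine (abs_rinn_le _ _).trans ?_
        exact mul_le_mul_of_nonneg_left (hxk (ψ j)) (norm_nonneg _)
      rw [abs_le]
      constructor
      · have := neg_abs_le (rinn (hs (ψ j)) (mmax φ v))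
        nlinarith [norm_nonneg (hs (ψ j)), norm_nonneg (mmax φ v)]
      · have := le_abs_self (rinn (hs (ψ j)) (mmax φ (v + hs (ψ j))))
        nlinarith [norm_nonneg (hs (ψ j)), norm_nonneg (mmax φ v)]
    rw [tendsto_iff_norm_sub_tendsto_zero]
    have hz : Tendsto (fun j => ‖hs (ψ j)‖ * (‖mmax φ v‖ + B)) atTop (𝓝 0) := by
      have := (tendsto_iff_norm_sub_tendsto_zero.1 hψ0)
      simp only [sub_zero] at this
      simpa using this.mul_const (‖mmax φ v‖ + B)
    apply squeeze_zero (fun j => norm_nonneg _) _ hz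
    intro j
    simpa [Real.norm_eq_abs] using hbnd j
  -- the limit y is the maximizer at v
  have hymax : IsCMax φ v y := by
    have hle : φ y ≤ ((rinn v y - rconj φ v : ℝ) : EReal) := by
      apply lsc_le_limit hφ hψtend _
      · intro j
        have hm := mmax_isMax hφ (v + hs (ψ j))
        simp only [Function.comp_apply]
        rw [(show φ (mmax φ (v + hs (ψ j))) =
          ((rinn (v + hs (ψ j)) (mmax φ (v + hs (ψ j))) - rconj φ (v + hs (ψ j)) : ℝ) : EReal) from hm)]
      · have hinner : Tendsto (fun j => rinn (v + hs (ψ j)) (mmax φ (v + hs (ψ j)))) atTop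
            (𝓝 (rinn v y)) := by
          simp only [rinn]
          exact hv'.inner hψtend
        exact hinner.sub hrconj
    have hge : ((rinn v y - rconj φ v : ℝ) : EReal) ≤ φ y := by
      apply ereal_sub_le_coe _ (phi_ne_bot hφ y)
      rw [← econj_eq_rconj hφ v]
      exact term_le_econj v y
    exact le_antisymm hle hge
  have hyeq : y = mmax φ v := isMax_unique hφ hymax (mmax_isMax hφ v)
  -- contradiction with ε < distances
  have hdist : ε ≤ ‖y - mmax φ v‖ := by
    have hnorm : Tendsto (fun j => ‖mmax φ (v + hs (ψ j)) - mmax φ v‖) atTop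
        (𝓝 ‖y - mmax φ v‖) := (hψtend.sub tendsto_const_nhds).norm
    exact ge_of_tendsto hnorm (Eventually.of_forall fun j => (hs2 (ψ j)).le)
  rw [hyeq] at hdist
  simp at hdist
  linarith

lemma hasGradientAt_rconj (hφ : PhiAssump φ C) (v : Euc d) :
    HasGradientAt (rconj φ) (mmax φ v) v := by
  rw [hasGradientAt_iff_hasFDerivAt, hasFDerivAt_iff_isLittleO_nhds_zero]
  rw [Asymptotics.isLittleO_iff]
  intro c hc
  obtain ⟨δ, hδ, hcont⟩ := mmax_cont hφ v c hc
  have hball : ∀ᶠ h : Euc d in 𝓝 0, ‖h‖ < δ := by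
    have := Metric.ball_mem_nhds (0 : Euc d) hδ
    filter_upwards [this] with h hh
    simpa [dist_zero_right] using hh
  filter_upwards [hball] with h hh
  have h1 := danskin_lb hφ v h
  have h2 := danskin_ub hφ v h
  have h3 : rinn h (mmax φ (v + h)) - rinn h (mmax φ v) = rinn h (mmax φ (v + h) - mmax φ v) := by
    rw [rinn_sub_right]
  have h4 : |rinn h (mmax φ (v + h) - mmax φ v)| ≤ ‖h‖ * c := by
    refine (abs_rinn_le _ _).trans ?_
    exact mul_le_mul_of_nonneg_left (hcont h hh) (norm_nonneg h)
  have htd : (InnerProductSpace.toDual ℝ (Euc d) (mmax φ v)) h = rinn (mmax φ v) h :=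
    InnerProductSpace.toDual_apply_apply
  rw [Real.norm_eq_abs, htd]
  have hsym : rinn (mmax φ v) h = rinn h (mmax φ v) := real_inner_comm _ _
  rw [hsym, abs_le]
  constructor
  · have : (0:ℝ) ≤ c * ‖h‖ := by positivity
    linarith
  · have h5 : rconj φ (v + h) - rconj φ v - rinn h (mmax φ v) ≤
        rinn h (mmax φ (v + h) - mmax φ v) := by
      rw [← h3]; linarith
    have h6 := (le_abs_self _).trans h4
    calc rconj φ (v + h) - rconj φ v - rinn h (mmax φ v) ≤
        rinn h (mmax φ (v + h) - mmax φ v) := h5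
      _ ≤ ‖h‖ * c := (le_abs_self _).trans h4
      _ = c * ‖h‖ := mul_comm _ _

lemma gradconj_eq_mmax (hφ : PhiAssump φ C) (v : Euc d) :
    gradconj φ v = mmax φ v := by
  rw [gradconj]
  exact (hasGradientAt_rconj hφ v).gradient

end Chunk5
noncomputable section Chunk6

variable {d : ℕ} {φ : Euc d → EReal} {C : Set (Euc d)}

lemma breg_mmax_top (hφ : PhiAssump φ C) (v z : Euc d) (hz : φ z = ⊤) :
    breg φ v (mmax φ v) z = ⊤ := by
  have hm := mmax_isMax hφ v
  rw [breg, hz, hm, EReal.top_sub_coe, EReal.top_sub_coe]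

lemma breg_mmax_eq (hφ : PhiAssump φ C) (v z : Euc d) (hz : φ z ≠ ⊤) :
    breg φ v (mmax φ v) z =
      (((φ z).toReal + rconj φ v - rinn v z : ℝ) : EReal) := by
  have hm := mmax_isMax hφ v
  have hzb := phi_ne_bot hφ z
  obtain ⟨r, hr⟩ : ∃ r : ℝ, φ z = ((r : ℝ) : EReal) :=
    ⟨(φ z).toReal, (EReal.coe_toReal hz hzb).symm⟩
  rw [breg, hm, hr, EReal.toReal_coe, ← EReal.coe_sub, ← EReal.coe_sub]
  apply congrArg
  have h1 : rinn v (z - mmax φ v) = rinn v z - rinn v (mmax φ v) := rinn_sub_right _ _ _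
  rw [h1]
  ring

lemma breg_mmax_mono (hφ : PhiAssump φ C) (v1 v2 z : Euc d)
    (h : rconj φ v1 - rinn v1 z ≤ rconj φ v2 - rinn v2 z) :
    breg φ v1 (mmax φ v1) z ≤ breg φ v2 (mmax φ v2) z := by
  rcases eq_or_ne (φ z) ⊤ with hz | hz
  · rw [breg_mmax_top hφ v2 z hz]; exact le_top
  rw [breg_mmax_eq hφ v1 z hz, breg_mmax_eq hφ v2 z hz, EReal.coe_le_coe_iff]
  linarith

/-- linearization bound at a solution point -/
lemma star_ineq {n : ℕ} {Dset : Set (Euc d)} {f : Fin n → Euc d → ℝ}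
    {f' : Fin n → Euc d → Euc d}
    (hφ : PhiAssump φ C) (hf : FAssump f f' Dset C) (hA2 : Assump2 φ f f')
    {x u : Euc d} (hu : u ∈ subdiff φ x) {i : Fin n} (hfpos : 0 < f i x)
    {z : Euc d} (hz : z ∈ solSet f C) :
    f i x + rinn (f' i x) (z - x) ≤ 0 := by
  have hfz : f i z = 0 := hz.2 i
  rcases hA2 i with ⟨hpos, hstar, -⟩ | ⟨hpos, hstar⟩ | ⟨a, b, haff⟩
  · have hmin : ∀ y, f i z ≤ f i y := fun y => hfz ▸ hpos y
    have := hstar.2 x z hmin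
    linarith
  · have hmin : ∀ y, f i z ≤ f i y := fun y => hfz ▸ hpos y
    have hne : x ≠ z := by
      intro h
      rw [h, hfz] at hfpos
      exact lt_irrefl _ hfpos
    have := hstar.2 x z hmin hne
    linarith
  · -- affine case: identify the gradient
    have hxD : x ∈ Dset := by
      apply hf.CsubD
      rw [← hφ.domC]
      exact subset_closure ⟨u, hu⟩
    have hgrad : HasGradientAt (f i) (f' i x) x := hf.grad i x hxD
    have hgrad2 : HasGradientAt (f i) a x := by
      have hfd : HasFDerivAt (fun y : Euc d => rinn a y + b)
          ((InnerProductSpace.toDual ℝ (Euc d) a : Euc d →L[ℝ] ℝ)) x := by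
        have h1 : HasFDerivAt (fun y : Euc d => (InnerProductSpace.toDual ℝ (Euc d) a) y + b)
            ((InnerProductSpace.toDual ℝ (Euc d) a : Euc d →L[ℝ] ℝ)) x :=
          (InnerProductSpace.toDual ℝ (Euc d) a).hasFDerivAt.add_const b
        convert h1 using 2
        rw [InnerProductSpace.toDual_apply_apply]; rfl
      have hfeq : f i = fun y : Euc d => rinn a y + b := funext haff
      rw [hasGradientAt_iff_hasFDerivAt, hfeq]
      exact hfd
    have hae : f' i x = a := by
      have h1 := (hasGradientAt_iff_hasFDerivAt.1 hgrad).unique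
        (hasGradientAt_iff_hasFDerivAt.1 hgrad2)
      exact (InnerProductSpace.toDual ℝ (Euc d)).injective h1
    rw [hae, haff x]
    have h2 : rinn a (z - x) = rinn a z - rinn a x := rinn_sub_right _ _ _
    have h3 : rinn a z + b = 0 := by rw [← haff z]; exact hfz
    linarith

/-- the main comparison, real form -/
lemma key_compare {n : ℕ} {Dset : Set (Euc d)} {f : Fin n → Euc d → ℝ}
    {f' : Fin n → Euc d → Euc d}
    (hφ : PhiAssump φ C) (hf : FAssump f f' Dset C) (hA2 : Assump2 φ f f')
    {x u : Euc d} (hu : u ∈ subdiff φ x) {i : Fin n} (hfpos : 0 < f i x)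
    {tk : ℝ} (htk : ∀ s : ℝ, lineObj φ f f' i x u tk ≤ lineObj φ f f' i x u s)
    {t : ℝ} (httk : t ≤ tk) {z : Euc d} (hz : z ∈ solSet f C) :
    rconj φ (u - tk • f' i x) - rinn (u - tk • f' i x) z ≤
      rconj φ (u - t • f' i x) - rinn (u - t • f' i x) z := by
  set g := f' i x
  set β : ℝ := rinn g x - f i x with hβ
  have hstar : rinn g z ≤ β := by
    have h1 := star_ineq hφ hf hA2 hu hfpos hz
    have h2 : rinn g (z - x) = rinn g z - rinn g x := rinn_sub_right _ _ _
    rw [hβ]; linarith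
  have hline := htk t
  rw [lineObj, lineObj] at hline
  have hr1 : rinn (u - tk • g) z = rinn u z - tk * rinn g z := by
    rw [rinn_sub_left, rinn_smul_left]
  have hr2 : rinn (u - t • g) z = rinn u z - t * rinn g z := by
    rw [rinn_sub_left, rinn_smul_left]
  rw [hr1, hr2]
  have hcross : (tk - t) * (rinn g z - β) ≤ 0 :=
    mul_nonpos_of_nonneg_of_nonpos (by linarith) (by linarith)
  nlinarith [hline]

end Chunk6
noncomputable section Chunk7

variable {d : ℕ} {N : Euc d → ℝ}

lemma IsANorm.zero (hN : IsANorm N) : N 0 = 0 := (hN.1 0).2 rfl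

lemma IsANorm.neg (hN : IsANorm N) (x : Euc d) : N (-x) = N x := by
  have := hN.2.1 (-1) x
  simpa using this

lemma IsANorm.nonneg (hN : IsANorm N) (x : Euc d) : 0 ≤ N x := by
  have h1 := hN.2.2 x (-x)
  rw [add_neg_cancel, hN.zero, hN.neg] at h1
  linarith

lemma rinn_smul_right (t : ℝ) (u w : Euc d) : rinn u (t • w) = t * rinn u w := by
  simp only [rinn]
  exact real_inner_smul_right u w t

/-- upper equivalence: `N x ≤ Cu * ‖x‖` -/
lemma IsANorm.upper (hN : IsANorm N) : ∃ Cu : ℝ, 0 < Cu ∧ ∀ x : Euc d, N x ≤ Cu * ‖x‖ := by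
  classical
  set e : Fin d → Euc d := fun j => EuclideanSpace.single j 1 with he
  set Cu : ℝ := (∑ j : Fin d, N (e j)) + 1 with hCu
  have hCu0 : 0 < Cu := by
    have : 0 ≤ ∑ j : Fin d, N (e j) := Finset.sum_nonneg fun j _ => hN.nonneg (e j)
    simp only [hCu]; linarith
  refine ⟨Cu, hCu0, fun x => ?_⟩
  have hdecomp : x = ∑ j : Fin d, x j • e j := by
    refine PiLp.ext fun i => ?_
    have h1 : (∑ j : Fin d, x j • e j) i = ∑ j : Fin d, (x j • e j) i := by
      rw [WithLp.ofLp_sum]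
      exact Finset.sum_apply i Finset.univ fun j => x j • e j
    rw [h1]
    have h2 : ∀ j : Fin d, (x j • e j) i = x j * (if j = i then 1 else 0) := by
      intro j
      rw [PiLp.smul_apply]
      simp only [he, EuclideanSpace.single_apply]
      simp [eq_comm]
    simp only [h2]
    rw [Finset.sum_eq_single i]
    · simp
    · intro b _ hb; simp [hb]
    · intro h; exact absurd (Finset.mem_univ i) h
  have hsum : ∀ (s : Finset (Fin d)) (g : Fin d → Euc d),
      N (∑ j ∈ s, g j) ≤ ∑ j ∈ s, N (g j) := by
    intro s
    induction s using Finset.cons_induction with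
    | empty => intro g; simp [hN.zero]
    | cons a s ha ih =>
      intro g
      rw [Finset.sum_cons, Finset.sum_cons]
      exact (hN.2.2 _ _).trans (by linarith [ih g])
  have hcoord : ∀ j : Fin d, |x j| ≤ ‖x‖ := by
    intro j
    have h1 : rinn (e j) x = x j := by
      simp only [rinn, he]
      rw [EuclideanSpace.inner_single_left]
      simp
    have h2 := abs_rinn_le (e j) x
    rw [h1] at h2
    have h3 : ‖e j‖ = 1 := by simp [he, EuclideanSpace.norm_single]
    rw [h3, one_mul] at h2
    exact h2
  calc N x = N (∑ j : Fin d, x j • e j) := by rw [← hdecomp]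
    _ ≤ ∑ j : Fin d, N (x j • e j) := hsum _ _
    _ = ∑ j : Fin d, |x j| * N (e j) := by
        apply Finset.sum_congr rfl
        intro j _
        exact hN.2.1 (x j) (e j)
    _ ≤ ∑ j : Fin d, ‖x‖ * N (e j) := by
        apply Finset.sum_le_sum
        intro j _
        exact mul_le_mul_of_nonneg_right (hcoord j) (hN.nonneg (e j))
    _ = (∑ j : Fin d, N (e j)) * ‖x‖ := by rw [← Finset.mul_sum, mul_comm]
    _ ≤ Cu * ‖x‖ := by
        apply mul_le_mul_of_nonneg_right _ (norm_nonneg x)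
        simp only [hCu]; linarith

/-- lower equivalence: `cl * ‖x‖ ≤ N x` (needs `d ≠ 0`) -/
lemma IsANorm.lower (hN : IsANorm N) (hd : d ≠ 0) :
    ∃ cl : ℝ, 0 < cl ∧ ∀ x : Euc d, cl * ‖x‖ ≤ N x := by
  obtain ⟨Cu, hCu0, hCu⟩ := hN.upper
  -- N is continuous
  have hlip : ∀ x y : Euc d, |N x - N y| ≤ Cu * ‖x - y‖ := by
    intro x y
    have h1 : N x ≤ N y + N (x - y) := by
      have := hN.2.2 y (x - y)
      simpa using this
    have h2 : N y ≤ N x + N (x - y) := by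
      have := hN.2.2 x (y - x)
      have h3 : N (y - x) = N (x - y) := by
        rw [← hN.neg (x - y)]; congr 1; abel
      simp only [add_sub_cancel] at this
      linarith
    rw [abs_le]
    constructor <;> nlinarith [hCu (x - y)]
  have hcont : Continuous N := by
    apply continuous_iff_continuousAt.2
    intro x
    rw [Metric.continuousAt_iff]
    intro ε hε
    refine ⟨ε / (Cu + 1), by positivity, fun {y} hy => ?_⟩
    have := hlip y x
    rw [Real.dist_eq]
    rw [dist_eq_norm] at hy
    have h2 : Cu * ‖y - x‖ ≤ Cu * (ε / (Cu + 1)) := mul_le_mul_of_nonneg_left hy.le hCu0.le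
    have h3 : Cu * (ε / (Cu + 1)) < ε := by
      rw [mul_div_assoc']
      rw [div_lt_iff₀ (by linarith)]
      nlinarith
    calc |N y - N x| ≤ Cu * ‖y - x‖ := this
      _ < ε := lt_of_le_of_lt h2 h3
  -- min on the unit sphere
  have hne : (Metric.sphere (0 : Euc d) 1).Nonempty := by
    refine ⟨EuclideanSpace.single (⟨0, Nat.pos_of_ne_zero hd⟩ : Fin d) 1, ?_⟩
    simp [EuclideanSpace.norm_single]
  obtain ⟨x0, hx0s, hx0min⟩ := (isCompact_sphere (0 : Euc d) 1).exists_isMinOn hne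
    hcont.continuousOn
  have hx0norm : ‖x0‖ = 1 := by simpa [mem_sphere_iff_norm] using hx0s
  have hx0ne : x0 ≠ 0 := by
    intro h
    rw [h, norm_zero] at hx0norm
    norm_num at hx0norm
  have hc0 : 0 < N x0 := by
    rcases (hN.nonneg x0).lt_or_eq with h | h
    · exact h
    · exact absurd ((hN.1 x0).1 h.symm) hx0ne
  refine ⟨N x0, hc0, fun x => ?_⟩
  rcases eq_or_ne x 0 with hx | hx
  · simp [hx, hN.zero]
  have hxn : 0 < ‖x‖ := norm_pos_iff.2 hx
  have hunit : (‖x‖⁻¹ • x) ∈ Metric.sphere (0 : Euc d) 1 := by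
    simp [norm_smul, abs_of_pos (inv_pos.2 hxn), inv_mul_cancel₀ hxn.ne']
  have hmin := hx0min hunit
  have hhom : N (‖x‖⁻¹ • x) = ‖x‖⁻¹ * N x := by
    rw [hN.2.1, abs_of_pos (inv_pos.2 hxn)]
  have hmin' : N x0 ≤ N (‖x‖⁻¹ • x) := hmin
  rw [hhom] at hmin'
  calc N x0 * ‖x‖ ≤ (‖x‖⁻¹ * N x) * ‖x‖ := by
        apply mul_le_mul_of_nonneg_right _ hxn.le
        exact hmin'
    _ = N x := by field_simp
  
lemma dualN_pair (hN : IsANorm N) (hd : d ≠ 0) (a w : Euc d) :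
    rinn a w ≤ dualN N a * N w := by
  obtain ⟨cl, hcl0, hcl⟩ := hN.lower hd
  have hbdd : BddAbove {r : ℝ | ∃ y : Euc d, N y ≤ 1 ∧ r = rinn a y} := by
    refine ⟨‖a‖ / cl, fun r hr => ?_⟩
    obtain ⟨y, hy1, rfl⟩ := hr
    have h1 : ‖y‖ ≤ 1 / cl := by
      rw [le_div_iff₀ hcl0]
      calc ‖y‖ * cl = cl * ‖y‖ := mul_comm _ _
        _ ≤ N y := hcl y
        _ ≤ 1 := hy1
    calc rinn a y ≤ |rinn a y| := le_abs_self _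
      _ ≤ ‖a‖ * ‖y‖ := abs_rinn_le a y
      _ ≤ ‖a‖ * (1 / cl) := mul_le_mul_of_nonneg_left h1 (norm_nonneg a)
      _ = ‖a‖ / cl := by ring
  rcases eq_or_ne w 0 with hw | hw
  · simp [hw, rinn, hN.zero]
  have hNw : 0 < N w := by
    have h1 := hcl w
    have h2 : 0 < ‖w‖ := norm_pos_iff.2 hw
    nlinarith
  have hmem : rinn a ((N w)⁻¹ • w) ∈ {r : ℝ | ∃ y : Euc d, N y ≤ 1 ∧ r = rinn a y} := by
    refine ⟨(N w)⁻¹ • w, ?_, rfl⟩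
    rw [hN.2.1, abs_of_pos (inv_pos.2 hNw), inv_mul_cancel₀ hNw.ne']
  have hle : rinn a ((N w)⁻¹ • w) ≤ dualN N a := le_csSup hbdd hmem
  rw [rinn_smul_right] at hle
  calc rinn a w = N w * ((N w)⁻¹ * rinn a w) := by field_simp
    _ ≤ N w * dualN N a := mul_le_mul_of_nonneg_left hle hNw.le
    _ = dualN N a * N w := mul_comm _ _

lemma dualN_pos (hN : IsANorm N) (hd : d ≠ 0) {a : Euc d} (ha : a ≠ 0) :
    0 < dualN N a := by
  obtain ⟨cl, hcl0, hcl⟩ := hN.lower hd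
  obtain ⟨Cu, hCu0, hCu⟩ := hN.upper
  have hbdd : BddAbove {r : ℝ | ∃ y : Euc d, N y ≤ 1 ∧ r = rinn a y} := by
    refine ⟨‖a‖ / cl, fun r hr => ?_⟩
    obtain ⟨y, hy1, rfl⟩ := hr
    have h1 : ‖y‖ ≤ 1 / cl := by
      rw [le_div_iff₀ hcl0]
      calc ‖y‖ * cl = cl * ‖y‖ := mul_comm _ _
        _ ≤ N y := hcl y
        _ ≤ 1 := hy1
    calc rinn a y ≤ |rinn a y| := le_abs_self _
      _ ≤ ‖a‖ * ‖y‖ := abs_rinn_le a y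
      _ ≤ ‖a‖ * (1 / cl) := mul_le_mul_of_nonneg_left h1 (norm_nonneg a)
      _ = ‖a‖ / cl := by ring
  have han : 0 < ‖a‖ := norm_pos_iff.2 ha
  set y : Euc d := (Cu * ‖a‖)⁻¹ • a with hy
  have hNy : N y ≤ 1 := by
    rw [hy, hN.2.1, abs_of_pos (by positivity)]
    have := hCu a
    rw [inv_mul_le_iff₀ (by positivity), mul_one]
    exact this
  have hval : rinn a y = (Cu * ‖a‖)⁻¹ * ‖a‖ ^ 2 := by
    rw [hy, rinn_smul_right]
    congr 1
    rw [rinn, real_inner_self_eq_norm_sq]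
  have hpos : 0 < rinn a y := by
    rw [hval]; positivity
  have hle : rinn a y ≤ dualN N a := le_csSup hbdd ⟨y, hNy, rfl⟩
  linarith

end Chunk7
noncomputable section Chunk8

variable {d : ℕ} {φ : Euc d → EReal} {C : Set (Euc d)}

lemma breg_fin (hφ : PhiAssump φ C) {a b : Euc d} (ha : φ a ≠ ⊤) (hb : φ b ≠ ⊤) (w : Euc d) :
    breg φ w a b = (((φ b).toReal - (φ a).toReal - rinn w (b - a) : ℝ) : EReal) := by
  rw [breg, ← EReal.coe_toReal ha (phi_ne_bot hφ a), ← EReal.coe_toReal hb (phi_ne_bot hφ b),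
    ← EReal.coe_sub, ← EReal.coe_sub]
  norm_num

lemma strong_pair (hφ : PhiAssump φ C) {σ : ℝ} {N : Euc d → ℝ} (hN : IsANorm N)
    (hsc : StronglyConvexWrt φ σ N) (v w : Euc d) :
    σ * (N (mmax φ v - mmax φ w)) ^ 2 ≤ rinn (v - w) (mmax φ v - mmax φ w) := by
  set mv := mmax φ v
  set mw := mmax φ w
  have hmv := mmax_isMax hφ v
  have hmw := mmax_isMax hφ w
  have hv : v ∈ subdiff φ mv := hmv.mem_subdiff hφ
  have hw : w ∈ subdiff φ mw := hmw.mem_subdiff hφ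
  have hdv : mv ∈ ddom φ := ⟨v, hv⟩
  have hdw : mw ∈ ddom φ := ⟨w, hw⟩
  have h1 := hsc mv hdv mw hdw v hv
  have h2 := hsc mw hdw mv hdv w hw
  rw [breg_fin hφ hmv.ne_top hmw.ne_top, EReal.coe_le_coe_iff] at h1
  rw [breg_fin hφ hmw.ne_top hmv.ne_top, EReal.coe_le_coe_iff] at h2
  have hNs : N (mw - mv) = N (mv - mw) := by
    rw [← hN.neg (mv - mw), neg_sub]
  rw [hNs] at h2
  have e1 : rinn v (mw - mv) = rinn v mw - rinn v mv := rinn_sub_right _ _ _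
  have e2 : rinn w (mv - mw) = rinn w mv - rinn w mw := rinn_sub_right _ _ _
  have e3 : rinn (v - w) (mv - mw) = rinn v (mv - mw) - rinn w (mv - mw) := rinn_sub_left _ _ _
  have e4 : rinn v (mv - mw) = rinn v mv - rinn v mw := rinn_sub_right _ _ _
  rw [e3, e4, e2]
  linarith

lemma rconj_convex (hφ : PhiAssump φ C) (p q : Euc d) (θ : ℝ) (h0 : 0 ≤ θ) (h1 : θ ≤ 1) :
    rconj φ (θ • p + (1 - θ) • q) ≤ θ * rconj φ p + (1 - θ) * rconj φ q := by
  set w : Euc d := θ • p + (1 - θ) • q with hwdef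
  set m : Euc d := mmax φ w
  have hm := mmax_isMax hφ w
  have t1 : rinn p m - (φ m).toReal ≤ rconj φ p := term_le_rconj hφ p m hm.ne_top
  have t2 : rinn q m - (φ m).toReal ≤ rconj φ q := term_le_rconj hφ q m hm.ne_top
  have hinner : rinn w m = θ * rinn p m + (1 - θ) * rinn q m := by
    rw [hwdef, rinn_add_left, rinn_smul_left, rinn_smul_left]
  have hval : rconj φ w = rinn w m - (φ m).toReal := by
    rw [hm.toReal]; ring
  have m1 : θ * (rinn p m - (φ m).toReal) ≤ θ * rconj φ p :=
    mul_le_mul_of_nonneg_left t1 h0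
  have m2 : (1 - θ) * (rinn q m - (φ m).toReal) ≤ (1 - θ) * rconj φ q :=
    mul_le_mul_of_nonneg_left t2 (by linarith)
  have hexp : rconj φ w = θ * (rinn p m - (φ m).toReal) + (1 - θ) * (rinn q m - (φ m).toReal) := by
    rw [hval, hinner]; ring
  linarith

lemma lineObj_hasDeriv {n : ℕ} {f : Fin n → Euc d → ℝ} {f' : Fin n → Euc d → Euc d}
    (hφ : PhiAssump φ C) (i : Fin n) (x u : Euc d) (s : ℝ) :
    HasDerivAt (fun r => lineObj φ f f' i x u r)
      ((rinn (f' i x) x - f i x) - rinn (f' i x) (mmax φ (u - s • f' i x))) s := by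
  set g := f' i x
  set β : ℝ := rinn g x - f i x
  have hc : HasDerivAt (fun r : ℝ => u - r • g) (-g) s := by
    have h1 : HasDerivAt (fun r : ℝ => r • g) g s := by
      simpa using (hasDerivAt_id s).smul_const g
    simpa using h1.const_sub u
  have hg := hasGradientAt_rconj hφ (u - s • g)
  rw [hasGradientAt_iff_hasFDerivAt] at hg
  have hcomp := hg.comp_hasDerivAt s hc
  have hlin : HasDerivAt (fun r : ℝ => r * β) β s := by
    simpa using (hasDerivAt_id s).mul_const β
  have hsum := hcomp.add hlin
  have hval : (InnerProductSpace.toDual ℝ (Euc d) (mmax φ (u - s • g))) (-g) + β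
      = β - rinn g (mmax φ (u - s • g)) := by
    rw [InnerProductSpace.toDual_apply_apply]
    have : inner ℝ (mmax φ (u - s • g)) (-g) = -(rinn g (mmax φ (u - s • g))) := by
      rw [inner_neg_right]
      exact congrArg Neg.neg (real_inner_comm _ _)
    rw [this]
    ring
  rw [hval] at hsum
  exact hsum

lemma lineObj_cvx {n : ℕ} {f : Fin n → Euc d → ℝ} {f' : Fin n → Euc d → Euc d}
    (hφ : PhiAssump φ C) (i : Fin n) (x u : Euc d) (a b θ : ℝ) (h0 : 0 ≤ θ) (h1 : θ ≤ 1) :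
    lineObj φ f f' i x u (θ * a + (1 - θ) * b) ≤
      θ * lineObj φ f f' i x u a + (1 - θ) * lineObj φ f f' i x u b := by
  set g := f' i x
  have hpt : u - (θ * a + (1 - θ) * b) • g = θ • (u - a • g) + (1 - θ) • (u - b • g) := by
    module
  rw [lineObj, lineObj, lineObj, hpt]
  have hcv := rconj_convex hφ (u - a • g) (u - b • g) θ h0 h1
  nlinarith [hcv]

/-- relaxed step size is below the exact step size -/
lemma tsig_le_tk {n : ℕ} {Dset : Set (Euc d)} {f : Fin n → Euc d → ℝ}
    {f' : Fin n → Euc d → Euc d}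
    (hφ : PhiAssump φ C) (hf : FAssump f f' Dset C) (hA2 : Assump2 φ f f')
    {x u : Euc d} (hu : u ∈ subdiff φ x) {i : Fin n} (hfpos : 0 < f i x)
    (hf'0 : f' i x ≠ 0)
    {tk : ℝ} (htk : ∀ s : ℝ, lineObj φ f f' i x u tk ≤ lineObj φ f f' i x u s)
    {σ : ℝ} {N : Euc d → ℝ} (hσpos : 0 < σ) (hN : IsANorm N)
    (hsc : StronglyConvexWrt φ σ N) :
    0 ≤ σ * f i x / (dualN N (f' i x)) ^ 2 ∧
      σ * f i x / (dualN N (f' i x)) ^ 2 ≤ tk := by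
  have hd : d ≠ 0 := by
    intro hd0
    apply hf'0
    refine PiLp.ext fun j => ?_
    exact absurd j.isLt (by simp [hd0])
  set g := f' i x with hg
  set L : ℝ := dualN N g with hL
  have hLpos : 0 < L := dualN_pos hN hd hf'0
  set tσ : ℝ := σ * f i x / L ^ 2 with htσ
  have htσpos : 0 < tσ := by
    rw [htσ]
    positivity
  refine ⟨le_of_lt htσpos, ?_⟩
  set h : ℝ → ℝ := fun s => lineObj φ f f' i x u s with hh
  have hx : mmax φ u = x := isMax_eq_mmax hφ (mem_subdiff_isMax hφ hu)
  have hderiv : ∀ s : ℝ, HasDerivAt h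
      ((rinn g x - f i x) - rinn g (mmax φ (u - s • g))) s :=
    fun s => lineObj_hasDeriv hφ i x u s
  have hcont : Continuous h :=
    continuous_iff_continuousAt.2 fun s => (hderiv s).continuousAt
  have hneg : ∀ s ∈ interior (Icc (0:ℝ) tσ), deriv h s < 0 := by
    rw [interior_Icc]
    rintro s ⟨hs0, hstσ⟩
    rw [(hderiv s).deriv]
    set p : Euc d := mmax φ (u - s • g)
    have hsub : rinn g (x - p) = rinn g x - rinn g p := rinn_sub_right _ _ _
    have hbound : rinn g (x - p) ≤ s * L ^ 2 / σ := by
      have hsp := strong_pair hφ hN hsc u (u - s • g)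
      rw [hx] at hsp
      have hdiff : u - (u - s • g) = s • g := by abel
      rw [hdiff, rinn_smul_left] at hsp
      have hpair := dualN_pair hN hd g (x - p)
      rcases eq_or_lt_of_le (hN.nonneg (x - p)) with hNz | hNz
      · have hxz : x - p = 0 := (hN.1 (x - p)).1 hNz.symm
        rw [hxz]
        have : rinn g (0 : Euc d) = 0 := by simp [rinn]
        rw [this]
        positivity
      · have hNle : σ * N (x - p) ≤ s * L := by
          nlinarith [hsp, hpair, hNz]
        have h2 : rinn g (x - p) ≤ L * N (x - p) := by
          rw [← hL] at hpair
          exact hpair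
        have h3 : L * N (x - p) ≤ L * (s * L / σ) := by
          apply mul_le_mul_of_nonneg_left _ hLpos.le
          rw [le_div_iff₀ hσpos]
          nlinarith [hNle]
        calc rinn g (x - p) ≤ L * (s * L / σ) := h2.trans h3
          _ = s * L ^ 2 / σ := by ring
    have hfinal : s * L ^ 2 / σ < f i x := by
      have heq : tσ * L ^ 2 / σ = f i x := by
        rw [htσ]
        field_simp
      rw [← heq]
      gcongr
    linarith [hsub, hbound, hfinal]
  have hanti : StrictAntiOn h (Icc (0:ℝ) tσ) :=
    strictAntiOn_of_deriv_neg (convex_Icc 0 tσ) hcont.continuousOn hneg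
  by_contra hlt
  push_neg at hlt
  rcases le_or_gt 0 tk with htk0 | htk0
  · have hx1 : tk ∈ Icc (0:ℝ) tσ := ⟨htk0, hlt.le⟩
    have hx2 : tσ ∈ Icc (0:ℝ) tσ := ⟨htσpos.le, le_rfl⟩
    have hc := hanti hx1 hx2 hlt
    have hmin := htk tσ
    simp only [hh] at hc
    linarith
  · set θ : ℝ := tσ / (tσ - tk) with hθ
    have hden : 0 < tσ - tk := by linarith
    have hθ0 : 0 ≤ θ := by positivity
    have hθ1 : θ ≤ 1 := by
      rw [hθ, div_le_one hden]; linarith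
    have hcomb : θ * tk + (1 - θ) * tσ = 0 := by
      rw [hθ]; field_simp; ring
    have hcv := lineObj_cvx (f := f) (f' := f') hφ i x u tk tσ θ hθ0 hθ1
    rw [hcomb] at hcv
    have hmin := htk tσ
    have h0tσ := hanti (⟨le_rfl, htσpos.le⟩ : (0:ℝ) ∈ Icc 0 tσ) ⟨htσpos.le, le_rfl⟩ htσpos
    simp only [hh] at h0tσ
    nlinarith [mul_le_mul_of_nonneg_left hmin hθ0]

end Chunk8
/-- Theorem: the exact Bregman projection step moves at least as close, in
Bregman distance, to every solution as any smaller step; in particular as the relaxed step. -/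
theorem statement9 {d n : ℕ} (φ : Euc d → EReal) (C Dset : Set (Euc d))
    (f : Fin n → Euc d → ℝ) (f' : Fin n → Euc d → Euc d)
    (hφ : PhiAssump φ C) (hf : FAssump f f' Dset C) (hS : (solSet f C).Nonempty)
    (hA2 : Assump2 φ f f')
    (x u : Euc d) (hu : u ∈ subdiff φ x)
    (i : Fin n) (hfpos : 0 < f i x) (hf'0 : f' i x ≠ 0)
    (tk : ℝ) (htk : ∀ s : ℝ, lineObj φ f f' i x u tk ≤ lineObj φ f f' i x u s)
    (u' x' : Euc d) (hu' : u' = u - tk • f' i x) (hx' : x' = gradconj φ u') :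
    (∀ t : ℝ, 0 ≤ t → t ≤ tk → ∀ z ∈ solSet f C,
        breg φ u' x' z ≤ breg φ (u - t • f' i x) (gradconj φ (u - t • f' i x)) z) ∧
    ∀ (σ : ℝ) (N : Euc d → ℝ), 0 < σ → IsANorm N → StronglyConvexWrt φ σ N →
      ∀ z ∈ solSet f C,
        breg φ u' x' z ≤
          breg φ (u - (σ * f i x / (dualN N (f' i x)) ^ 2) • f' i x)
            (gradconj φ (u - (σ * f i x / (dualN N (f' i x)) ^ 2) • f' i x)) z := by
  subst hu'
  subst hx'
  constructor
  · intro t ht0 httk z hz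
    simp only [gradconj_eq_mmax hφ]
    exact breg_mmax_mono hφ _ _ z (key_compare hφ hf hA2 hu hfpos htk httk hz)
  · intro σ N hσ hNn hsc z hz
    obtain ⟨h0, hle⟩ := tsig_le_tk hφ hf hA2 hu hfpos hf'0 htk hσ hNn hsc
    simp only [gradconj_eq_mmax hφ]
    exact breg_mmax_mono hφ _ _ z (key_compare hφ hf hA2 hu hfpos htk hle hz)
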